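/- For the scalar linear DDE x'(t) = a x(t) + b x(t−τ) with constant history x ≡ c on [−τ, 0] and a ≠ 0, the solution x(t; τ) on the second interval [τ, 2τ] is differentiable with respect to the delay τ, and for fixed t ∈ (τ, 2τ), ∂x/∂τ(t; τ) = −b·∫_τ^t e^{a(t−s)} x'(s−τ) ds. -/

import Mathlib

open Set

/-- A function continuous on `[p,q]` with zero derivative on `(p,q)` is constant. -/
lemma dde_const_on {f : ℝ → ℝ} {p q : ℝ} (hpq : p ≤ q)
    (hc : ContinuousOn f (Icc p q)) (hd : ∀ u ∈ Ioo p q, HasDerivAt f 0 u) :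
    ∀ u ∈ Icc p q, f u = f p := by
  have hdiff : DifferentiableOn ℝ f (interior (Icc p q)) := by
    rw [interior_Icc]
    exact fun u hu => ((hd u hu).differentiableAt).differentiableWithinAt
  have hmono : MonotoneOn f (Icc p q) :=
    monotoneOn_of_deriv_nonneg (convex_Icc p q) hc hdiff (fun u hu => by
      rw [interior_Icc] at hu; rw [(hd u hu).deriv])
  have hanti : AntitoneOn f (Icc p q) :=
    antitoneOn_of_deriv_nonpos (convex_Icc p q) hc hdiff (fun u hu => by
      rw [interior_Icc] at hu; rw [(hd u hu).deriv])
  intro u hu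
  have hp : p ∈ Icc p q := ⟨le_refl p, hpq⟩
  exact le_antisymm (hanti hp hu hu.1) (hmono hp hu hu.1)

/-- On the first interval `[0, τ']`, the solution has the explicit form
`(c + bc/a) e^{a u} - bc/a`. -/
lemma dde_first_interval (a b c : ℝ) (ha : a ≠ 0) (τ' : ℝ) (hτ' : 0 < τ')
    (x : ℝ → ℝ)
    (hist : ∀ s ∈ Icc (-τ') (0:ℝ), x s = c)
    (hcont : ContinuousOn x (Ici (-τ')))
    (hsol : ∀ u ∈ Ioi (0:ℝ), HasDerivAt x (a * x u + b * x (u - τ')) u) :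
    ∀ u ∈ Icc (0:ℝ) τ', x u = (c + b * c / a) * Real.exp (a * u) - b * c / a := by
  set B : ℝ := b * c / a with hB
  have haB : a * B = b * c := by rw [hB]; field_simp
  set w : ℝ → ℝ := fun u => Real.exp (-(a * u)) * (x u + B) with hw
  have hwc : ContinuousOn w (Icc 0 τ') := by
    apply ContinuousOn.mul
    · exact (Real.continuous_exp.comp (continuous_const.mul continuous_id).neg).continuousOn
    · apply ContinuousOn.add
      · exact hcont.mono (fun u hu => le_trans (by linarith [hτ'.le]) hu.1)
      · exact continuousOn_const
  have hwd : ∀ u ∈ Ioo (0:ℝ) τ', HasDerivAt w 0 u := by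
    intro u hu
    obtain ⟨hu1, hu2⟩ := hu
    have hx' : HasDerivAt x (a * x u + b * c) u := by
      have := hsol u hu1
      rwa [hist (u - τ') ⟨by linarith, by linarith⟩] at this
    have he : HasDerivAt (fun u => Real.exp (-(a * u))) (-a * Real.exp (-(a * u))) u := by
      have h1 : HasDerivAt (fun u : ℝ => -(a * u)) (-a) u := by
        exact ((hasDerivAt_id' u).const_mul a).neg.congr_deriv (by ring)
      simpa [mul_comm] using h1.exp
    have := he.mul (hx'.add_const B)
    refine this.congr_deriv (Eq.symm ?_)
    linear_combination Real.exp (-(a * u)) * haB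
  have hwconst := dde_const_on hτ'.le hwc hwd
  intro u hu
  have h0 : w 0 = c + B := by
    simp [hw, hist 0 ⟨by linarith, le_refl 0⟩]
  have hu' := hwconst u hu
  rw [h0] at hu'
  have hu'' : Real.exp (-(a * u)) * (x u + B) = c + B := hu'
  have h2 : Real.exp (-(a * u)) * Real.exp (a * u) = 1 := by
    rw [← Real.exp_add]; simp
  have key : x u + B = (c + B) * Real.exp (a * u) := by
    calc x u + B = (x u + B) * (Real.exp (-(a * u)) * Real.exp (a * u)) := by
          rw [h2, mul_one]
      _ = (Real.exp (-(a * u)) * (x u + B)) * Real.exp (a * u) := by ring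
      _ = (c + B) * Real.exp (a * u) := by rw [hu'']
  linarith [key]


/-- On the second interval, for `τ' < t < 2τ'`, the solution has an explicit closed form. -/
lemma dde_second_interval (a b c : ℝ) (ha : a ≠ 0) (τ' t : ℝ) (hτ' : 0 < τ')
    (ht1 : τ' < t) (ht2 : t < 2 * τ')
    (x : ℝ → ℝ)
    (hist : ∀ s ∈ Icc (-τ') (0:ℝ), x s = c)
    (hcont : ContinuousOn x (Ici (-τ')))
    (hsol : ∀ u ∈ Ioi (0:ℝ), HasDerivAt x (a * x u + b * x (u - τ')) u) :
    x t = Real.exp (a * t) * ((c + b * c / a)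
        - (b * c / a) * Real.exp (-(a * τ'))
        + b * (c + b * c / a) * Real.exp (-(a * τ')) * (t - τ')
        + (b * (b * c / a) / a) * (Real.exp (-(a * t)) - Real.exp (-(a * τ')))) := by
  have hfirst := dde_first_interval a b c ha τ' hτ' x hist hcont hsol
  set A : ℝ := c + b * c / a with hA
  set B : ℝ := b * c / a with hB
  have haB : a * B = b * c := by rw [hB]; field_simp
  set v : ℝ → ℝ := fun s => Real.exp (-(a * s)) * x s -
      (b * A * Real.exp (-(a * τ')) * s + (b * B / a) * Real.exp (-(a * s))) with hv
  have hvc : ContinuousOn v (Icc τ' t) := by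
    have hsub : Icc τ' t ⊆ Ici (-τ') := fun s hs => le_trans (by linarith) hs.1
    apply ContinuousOn.sub
    · exact ((Real.continuous_exp.comp (continuous_const.mul continuous_id).neg).continuousOn).mul
        (hcont.mono hsub)
    · exact ((continuous_const.mul continuous_id).add (continuous_const.mul
        (Real.continuous_exp.comp (continuous_const.mul continuous_id).neg))).continuousOn
  have hvd : ∀ s ∈ Ioo τ' t, HasDerivAt v 0 s := by
    intro s hs
    obtain ⟨hs1, hs2⟩ := hs
    have hxs : x (s - τ') = A * Real.exp (a * (s - τ')) - B :=
      hfirst (s - τ') ⟨by linarith, by linarith⟩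
    have hx' : HasDerivAt x (a * x s + b * (A * Real.exp (a * (s - τ')) - B)) s := by
      have := hsol s (by simp; linarith)
      rwa [hxs] at this
    have he : ∀ u : ℝ, HasDerivAt (fun u => Real.exp (-(a * u))) (-a * Real.exp (-(a * u))) u := by
      intro u
      have h1 : HasDerivAt (fun u : ℝ => -(a * u)) (-a) u := by
        exact ((hasDerivAt_id' u).const_mul a).neg.congr_deriv (by ring)
      simpa [mul_comm] using h1.exp
    have hd1 := (he s).mul hx'
    have hd2 : HasDerivAt (fun s => b * A * Real.exp (-(a * τ')) * s +
        (b * B / a) * Real.exp (-(a * s)))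
        (b * A * Real.exp (-(a * τ')) + (b * B / a) * (-a * Real.exp (-(a * s)))) s := by
      exact ((hasDerivAt_id' s).const_mul (b * A * Real.exp (-(a * τ')))).add
        ((he s).const_mul (b * B / a)) |>.congr_deriv (by ring)
    have := hd1.sub hd2
    refine this.congr_deriv (Eq.symm ?_)
    have hexp : Real.exp (-(a * s)) * Real.exp (a * (s - τ')) = Real.exp (-(a * τ')) := by
      rw [← Real.exp_add]; ring_nf
    linear_combination (-(b * A)) * hexp + (-(b^2*c*a⁻¹*Real.exp (-(a*s)))) * mul_inv_cancel₀ ha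
  have hvconst := dde_const_on ht1.le hvc hvd
  have hvt := hvconst t ⟨ht1.le, le_refl t⟩
  have hxτ : x τ' = A * Real.exp (a * τ') - B := hfirst τ' ⟨hτ'.le, le_refl τ'⟩
  have h2 : Real.exp (-(a * t)) * Real.exp (a * t) = 1 := by
    rw [← Real.exp_add]; simp
  have h3 : Real.exp (-(a * τ')) * Real.exp (a * τ') = 1 := by
    rw [← Real.exp_add]; simp
  have hvt' : Real.exp (-(a * t)) * x t -
      (b * A * Real.exp (-(a * τ')) * t + (b * B / a) * Real.exp (-(a * t))) =
      Real.exp (-(a * τ')) * x τ' -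
      (b * A * Real.exp (-(a * τ')) * τ' + (b * B / a) * Real.exp (-(a * τ'))) := hvt
  rw [hxτ] at hvt'
  have hne : Real.exp (-(a * t)) ≠ 0 := Real.exp_ne_zero _
  have : x t = Real.exp (a * t) * (Real.exp (-(a * t)) * x t) := by
    rw [← mul_assoc, mul_comm (Real.exp (a * t)) _, h2, one_mul]
  rw [this]
  linear_combination (Real.exp (a * t)) * hvt' + (Real.exp (a*t) * A) * h3

theorem linear_dde_delay_sensitivity (a b c τ : ℝ) (ha : a ≠ 0) (hτ : 0 < τ)
    (x : ℝ → ℝ → ℝ)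
    (hist : ∀ τ' > (0:ℝ), ∀ s ∈ Icc (-τ') (0:ℝ), x τ' s = c)
    (hcont : ∀ τ' > (0:ℝ), ContinuousOn (x τ') (Ici (-τ')))
    (hsol : ∀ τ' > (0:ℝ), ∀ t ∈ Ioi (0:ℝ),
      HasDerivAt (x τ') (a * x τ' t + b * x τ' (t - τ')) t)
    (t : ℝ) (ht : t ∈ Ioo τ (2 * τ)) :
    HasDerivAt (fun τ' => x τ' t)
      (-b * ∫ s in τ..t, Real.exp (a * (t - s)) * deriv (x τ) (s - τ)) τ := by
  obtain ⟨ht1, ht2⟩ := ht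
  set A : ℝ := c + b * c / a with hA
  set B : ℝ := b * c / a with hB
  have haB : a * B = b * c := by rw [hB]; field_simp
  -- value of the integral
  have hI : (∫ s in τ..t, Real.exp (a * (t - s)) * deriv (x τ) (s - τ))
      = (t - τ) * (a * A * Real.exp (a * (t - τ))) := by
    have hfirst := dde_first_interval a b c ha τ hτ (x τ) (hist τ hτ) (hcont τ hτ) (hsol τ hτ)
    have heq : ∀ s ∈ Set.uIoc τ t, Real.exp (a * (t - s)) * deriv (x τ) (s - τ)
        = a * A * Real.exp (a * (t - τ)) := by
      intro s hs
      rw [uIoc_of_le ht1.le] at hs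
      obtain ⟨hs1, hs2⟩ := hs
      have hx1 : x τ (s - τ - τ) = c := hist τ hτ _ ⟨by linarith, by linarith⟩
      have hx2 : x τ (s - τ) = A * Real.exp (a * (s - τ)) - B :=
        hfirst (s - τ) ⟨by linarith, by linarith⟩
      have hd := hsol τ hτ (s - τ) (by simp; linarith)
      rw [hx1, hx2] at hd
      rw [hd.deriv]
      have hexp : Real.exp (a * (t - s)) * Real.exp (a * (s - τ)) = Real.exp (a * (t - τ)) := by
        rw [← Real.exp_add]; ring_nf
      linear_combination (a * A) * hexp + (-(Real.exp (a * (t - s)))) * haB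
    rw [intervalIntegral.integral_congr_ae (Filter.Eventually.of_forall heq),
      intervalIntegral.integral_const, smul_eq_mul]
  rw [hI]
  set F : ℝ → ℝ := fun τ' => Real.exp (a * t) * (A - B * Real.exp (-(a * τ'))
      + b * A * Real.exp (-(a * τ')) * (t - τ')
      + (b * B / a) * (Real.exp (-(a * t)) - Real.exp (-(a * τ')))) with hF
  have heqF : (fun τ' => x τ' t) =ᶠ[nhds τ] F := by
    have hmem : Ioo (t / 2) t ∈ nhds τ := Ioo_mem_nhds (by linarith) ht1
    filter_upwards [hmem] with τ' hm
    obtain ⟨h1, h2⟩ := hm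
    have hτ'0 : (0:ℝ) < τ' := by linarith
    exact dde_second_interval a b c ha τ' t hτ'0 h2 (by linarith) (x τ')
      (hist τ' hτ'0) (hcont τ' hτ'0) (hsol τ' hτ'0)
  have hE : ∀ u : ℝ, HasDerivAt (fun u => Real.exp (-(a * u))) (-a * Real.exp (-(a * u))) u := by
    intro u
    have h1 : HasDerivAt (fun u : ℝ => -(a * u)) (-a) u := by
      exact ((hasDerivAt_id' u).const_mul a).neg.congr_deriv (by ring)
    simpa [mul_comm] using h1.exp
  have hd1 : HasDerivAt (fun τ' => B * Real.exp (-(a * τ')))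
      (B * (-a * Real.exp (-(a * τ)))) τ := (hE τ).const_mul B
  have hd2 : HasDerivAt (fun τ' => b * A * Real.exp (-(a * τ')) * (t - τ'))
      ((b * A * (-a * Real.exp (-(a * τ)))) * (t - τ) + (b * A * Real.exp (-(a * τ))) * (-1)) τ := by
    have := ((hE τ).const_mul (b * A)).mul ((hasDerivAt_id τ).const_sub t)
    exact this.congr_deriv (by simp only [id])
  have hd3 : HasDerivAt (fun τ' => (b * B / a) * (Real.exp (-(a * t)) - Real.exp (-(a * τ'))))
      ((b * B / a) * (-(-a * Real.exp (-(a * τ))))) τ :=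
    ((hE τ).const_sub (Real.exp (-(a * t)))).const_mul (b * B / a)
  have hdF := ((((hasDerivAt_const τ A).sub hd1).add hd2).add hd3).const_mul (Real.exp (a * t))
  refine HasDerivAt.congr_of_eventuallyEq ?_ heqF
  refine hdF.congr_deriv (Eq.symm ?_)
  have hexp : Real.exp (a * t) * Real.exp (-(a * τ)) = Real.exp (a * (t - τ)) := by
    rw [← Real.exp_add]; ring_nf
  linear_combination (b * (t - τ) * a * A) * hexp + (-(b*c + b^2*c*a⁻¹) * Real.exp (a*t) * Real.exp (-(a*τ))) * mul_inv_cancel₀ ha
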